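/- For $n\ge 4$: $\overline{P}_{\mathrm{SCF}}\subseteq\overline{P}_{\mathrm{DL}}\subseteq\overline{P}_{\mathrm{MTZ}}$, where $\overline{P}_{\mathrm{SCF}}=\{x\in P_{\mathrm{AP}}:\sum_{ij\in A(S)}x_{ij}\le|S|-1\ \forall S\subseteq N_1,|S|\ge 2\}$, $\overline{P}_{\mathrm{DL}}=\{x\in P_{\mathrm{AP}}: \sum_{ij\in C}(x_{ij}+x_{ji})-x_{lk}\le|C|-1\ \forall C\in\mathcal{C}_1,\ \forall kl\in C,\ |C|\ge 3;\ x_{ij}+x_{ji}\le 1\ \forall ij\in A_1\}$, and $\overline{P}_{\mathrm{MTZ}}=\{x\in P_{\mathrm{AP}}:\sum_{ij\in C}x_{ij}\le|C|-1\ \forall C\in\mathcal{C}_1\}$. Moreover, for $n\ge 5$ both inclusions are strict. -/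

import Mathlib

/-- Weight of a directed cycle given by nodes `v 0, …, v (k-1)` with arcs
`(v i, v ((i+1) % k))`. -/
def cycleSum {α : Type} (c : α → α → ℝ) (k : ℕ) (v : ℕ → α) : ℝ :=
  ∑ i ∈ Finset.range k, c (v i) (v ((i + 1) % k))

/-- A directed cycle: at least two distinct nodes `v 0, …, v (k-1)`. -/
def IsCycle {α : Type} (k : ℕ) (v : ℕ → α) : Prop :=
  2 ≤ k ∧ ∀ i < k, ∀ j < k, v i = v j → i = j

/-- A directed cycle avoiding node `0` (the paper's node 1), i.e. a member of `𝒞₁`. -/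
def IsCycle1 {n : ℕ} (k : ℕ) (v : ℕ → Fin (n + 1)) : Prop :=
  IsCycle k v ∧ ∀ i < k, v i ≠ 0

/-- The (restricted) assignment polytope `P_AP`. -/
def memPAP {n : ℕ} (x : Fin (n + 1) → Fin (n + 1) → ℝ) : Prop :=
  (∀ i j : Fin (n + 1), i ≠ j → 0 ≤ x i j ∧ x i j ≤ 1) ∧
  (∀ i : Fin (n + 1), ∑ j ∈ Finset.univ.erase i, x i j = 1) ∧
  (∀ i : Fin (n + 1), ∑ j ∈ Finset.univ.erase i, x j i = 1)

/-- The closure `P̄_SCF`: `P_AP` with the clique inequalities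
`∑_{ij ∈ A(S)} x_{ij} ≤ |S| - 1` for all `S ⊆ N₁`, `|S| ≥ 2`. -/
def memPSCFbar {n : ℕ} (x : Fin (n + 1) → Fin (n + 1) → ℝ) : Prop :=
  memPAP x ∧ ∀ S : Finset (Fin (n + 1)), (0 : Fin (n + 1)) ∉ S → 2 ≤ S.card →
    ∑ i ∈ S, ∑ j ∈ S.erase i, x i j ≤ (S.card : ℝ) - 1

/-- The closure `P̄_DL`: `P_AP` with, for each cycle `C ∈ 𝒞₁` with `|C| ≥ 3` and
each arc `kl ∈ C`, the inequality `∑_{ij∈C}(x_{ij} + x_{ji}) - x_{lk} ≤ |C| - 1`,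
plus `x_{ij} + x_{ji} ≤ 1` for all `ij ∈ A₁`. -/
def memPDLbar {n : ℕ} (x : Fin (n + 1) → Fin (n + 1) → ℝ) : Prop :=
  memPAP x ∧
  (∀ (k : ℕ) (v : ℕ → Fin (n + 1)), IsCycle1 k v → 3 ≤ k → ∀ i0 < k,
    (∑ i ∈ Finset.range k,
        (x (v i) (v ((i + 1) % k)) + x (v ((i + 1) % k)) (v i)))
      - x (v ((i0 + 1) % k)) (v i0) ≤ (k : ℝ) - 1) ∧
  ∀ i j : Fin (n + 1), i ≠ 0 → j ≠ 0 → i ≠ j → x i j + x j i ≤ 1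

/-- The closure `P̄_MTZ`: `P_AP` with the circuit inequalities. -/
def memPMTZbar {n : ℕ} (x : Fin (n + 1) → Fin (n + 1) → ℝ) : Prop :=
  memPAP x ∧ ∀ (k : ℕ) (v : ℕ → Fin (n + 1)), IsCycle1 k v →
    cycleSum x k v ≤ (k : ℝ) - 1

-- helper nat lemmas
lemma succ_mod_ne {k i : ℕ} (hk : 2 ≤ k) (hi : i < k) : (i + 1) % k ≠ i := by
  rcases Nat.lt_or_ge (i + 1) k with h | h
  · rw [Nat.mod_eq_of_lt h]; omega
  · have h1 : i + 1 = k := by omega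
    rw [h1, Nat.mod_self]; omega

lemma two_mod_ne {k j : ℕ} (hk : 3 ≤ k) (hj : j < k) : (j + 2) % k ≠ j := by
  rcases Nat.lt_or_ge (j + 2) k with h | h
  · rw [Nat.mod_eq_of_lt h]; omega
  · have h2 : j + 2 - k < k := by omega
    rw [Nat.mod_eq_sub_mod h, Nat.mod_eq_of_lt h2]; omega

lemma arc_ne {α : Type} {k : ℕ} {v : ℕ → α}
    (hk : 2 ≤ k) (hinj : ∀ i < k, ∀ j < k, v i = v j → i = j)
    {i : ℕ} (hi : i < k) : v i ≠ v ((i + 1) % k) := by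
  intro h
  exact succ_mod_ne hk hi (hinj _ (Nat.mod_lt _ (by omega)) _ hi h.symm)

lemma sum_range_le {k : ℕ} {f : ℕ → ℝ} {B : ℝ} (h : ∀ i < k, f i ≤ B) :
    ∑ i ∈ Finset.range k, f i ≤ k * B := by
  calc ∑ i ∈ Finset.range k, f i ≤ ∑ _i ∈ Finset.range k, B :=
        Finset.sum_le_sum (fun i hi => h i (Finset.mem_range.mp hi))
    _ = k * B := by rw [Finset.sum_const, Finset.card_range]; simp

lemma offDiag_sum {n : ℕ} (S : Finset (Fin (n+1))) (x : Fin (n+1) → Fin (n+1) → ℝ) :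
    ∑ p ∈ S.offDiag, x p.1 p.2 = ∑ i ∈ S, ∑ j ∈ S.erase i, x i j := by
  rw [show S.offDiag = (S ×ˢ S).filter (fun a => a.1 ≠ a.2) from by ext; simp [and_assoc],
    Finset.sum_filter, Finset.sum_product]
  refine Finset.sum_congr rfl (fun i _ => ?_)
  rw [← Finset.filter_ne' S i, Finset.sum_filter]
  refine Finset.sum_congr rfl (fun j _ => ?_)
  by_cases h : i = j
  · simp [h]
  · simp [h, Ne.symm h]

theorem scf_dl {n : ℕ} (x : Fin (n + 1) → Fin (n + 1) → ℝ) (hx : memPSCFbar x) :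
    memPDLbar x := by
  obtain ⟨hap, hclique⟩ := hx
  refine ⟨hap, ?_, ?_⟩
  · intro k v hc hk3 i0 hi0
    obtain ⟨⟨hk2, hinj⟩, hne0⟩ := hc
    have hmlt : ∀ i : ℕ, (i + 1) % k < k := fun i => Nat.mod_lt _ (by omega)
    set S : Finset (Fin (n+1)) := (Finset.range k).image v with hS
    have hScard : S.card = k := by
      rw [hS, Finset.card_image_of_injOn, Finset.card_range]
      intro a ha b hb h
      exact hinj a (Finset.mem_range.mp ha) b (Finset.mem_range.mp hb) h
    have h0S : (0 : Fin (n+1)) ∉ S := by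
      intro h
      obtain ⟨i, hi, hvi⟩ := Finset.mem_image.mp h
      exact hne0 i (Finset.mem_range.mp hi) hvi
    set Fwd : Finset (Fin (n+1) × Fin (n+1)) :=
      (Finset.range k).image (fun i => (v i, v ((i + 1) % k))) with hFwd
    set Bwd : Finset (Fin (n+1) × Fin (n+1)) :=
      (Finset.range k).image (fun i => (v ((i + 1) % k), v i)) with hBwd
    have hFs : ∑ p ∈ Fwd, x p.1 p.2 = ∑ i ∈ Finset.range k, x (v i) (v ((i + 1) % k)) := by
      rw [hFwd]
      refine Finset.sum_image ?_
      intro a ha b hb h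
      exact hinj a (Finset.mem_range.mp ha) b (Finset.mem_range.mp hb)
        (congrArg Prod.fst h)
    have hBs : ∑ p ∈ Bwd, x p.1 p.2 = ∑ i ∈ Finset.range k, x (v ((i + 1) % k)) (v i) := by
      rw [hBwd]
      refine Finset.sum_image ?_
      intro a ha b hb h
      exact hinj a (Finset.mem_range.mp ha) b (Finset.mem_range.mp hb)
        (congrArg Prod.snd h)
    have hdisj : Disjoint Fwd Bwd := by
      rw [Finset.disjoint_left]
      intro p hpF hpB
      obtain ⟨i, hi, hif⟩ := Finset.mem_image.mp hpF
      obtain ⟨j, hj, hjb⟩ := Finset.mem_image.mp hpB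
      rw [← hjb] at hif
      have h1 : v i = v ((j + 1) % k) := congrArg Prod.fst hif
      have h2 : v ((i + 1) % k) = v j := congrArg Prod.snd hif
      have e1 : i = (j + 1) % k := hinj _ (Finset.mem_range.mp hi) _ (hmlt j) h1
      have e2 : (i + 1) % k = j := hinj _ (hmlt i) _ (Finset.mem_range.mp hj) h2
      rw [e1, Nat.mod_add_mod] at e2
      exact two_mod_ne hk3 (Finset.mem_range.mp hj) e2
    have hsub : Fwd ∪ Bwd ⊆ S.offDiag := by
      intro p hp
      rw [Finset.mem_union] at hp
      rcases hp with hp | hp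
      · obtain ⟨i, hi, rfl⟩ := Finset.mem_image.mp hp
        refine Finset.mem_offDiag.mpr ⟨?_, ?_, ?_⟩
        · exact Finset.mem_image_of_mem v hi
        · exact Finset.mem_image_of_mem v (Finset.mem_range.mpr (hmlt i))
        · exact arc_ne hk2 hinj (Finset.mem_range.mp hi)
      · obtain ⟨i, hi, rfl⟩ := Finset.mem_image.mp hp
        refine Finset.mem_offDiag.mpr ⟨?_, ?_, ?_⟩
        · exact Finset.mem_image_of_mem v (Finset.mem_range.mpr (hmlt i))
        · exact Finset.mem_image_of_mem v hi
        · exact (arc_ne hk2 hinj (Finset.mem_range.mp hi)).symm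
    have hrev : ((v ((i0 + 1) % k), v i0) : Fin (n+1) × Fin (n+1)) ∈ Fwd ∪ Bwd :=
      Finset.mem_union_right _ (Finset.mem_image_of_mem _ (Finset.mem_range.mpr hi0))
    have key : (∑ i ∈ Finset.range k,
        (x (v i) (v ((i + 1) % k)) + x (v ((i + 1) % k)) (v i)))
        = ∑ p ∈ Fwd ∪ Bwd, x p.1 p.2 := by
      rw [Finset.sum_union hdisj, hFs, hBs, ← Finset.sum_add_distrib]
    have h1 : (∑ p ∈ Fwd ∪ Bwd, x p.1 p.2) - x (v ((i0 + 1) % k)) (v i0)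
        = ∑ p ∈ (Fwd ∪ Bwd).erase (v ((i0 + 1) % k), v i0), x p.1 p.2 :=
      (Finset.sum_erase_eq_sub hrev).symm
    have h2 : ∑ p ∈ (Fwd ∪ Bwd).erase (v ((i0 + 1) % k), v i0), x p.1 p.2
        ≤ ∑ p ∈ S.offDiag, x p.1 p.2 := by
      refine Finset.sum_le_sum_of_subset_of_nonneg
        ((Finset.erase_subset _ _).trans hsub) (fun p hp _ => ?_)
      exact (hap.1 p.1 p.2 (Finset.mem_offDiag.mp hp).2.2).1
    have h3 := hclique S h0S (by rw [hScard]; omega)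
    rw [key, h1]
    calc ∑ p ∈ (Fwd ∪ Bwd).erase (v ((i0 + 1) % k), v i0), x p.1 p.2
        ≤ ∑ p ∈ S.offDiag, x p.1 p.2 := h2
      _ = ∑ i ∈ S, ∑ j ∈ S.erase i, x i j := offDiag_sum S x
      _ ≤ (S.card : ℝ) - 1 := h3
      _ = (k : ℝ) - 1 := by rw [hScard]
  · intro i j hi0 hj0 hij
    have h := hclique {i, j} (by simp [Ne.symm hi0, Ne.symm hj0])
      (by rw [Finset.card_insert_of_notMem (by simp [hij]), Finset.card_singleton])
    rw [Finset.card_insert_of_notMem (by simp [hij]), Finset.card_singleton] at h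
    have e1 : ({i, j} : Finset (Fin (n+1))).erase i = {j} := by
      rw [Finset.erase_insert (by simp [hij])]
    have e2 : ({i, j} : Finset (Fin (n+1))).erase j = {i} := by
      rw [Finset.erase_insert_of_ne hij, Finset.erase_singleton]; rfl
    rw [Finset.sum_pair hij, e1, e2, Finset.sum_singleton, Finset.sum_singleton] at h
    norm_num at h
    linarith

theorem dl_mtz {n : ℕ} (x : Fin (n + 1) → Fin (n + 1) → ℝ) (hx : memPDLbar x) :
    memPMTZbar x := by
  obtain ⟨hap, hcyc, h2c⟩ := hx
  refine ⟨hap, ?_⟩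
  rintro k v ⟨⟨hk2, hinj⟩, hne0⟩
  unfold cycleSum
  rcases eq_or_lt_of_le hk2 with hk | hk3
  · -- k = 2
    obtain rfl : k = 2 := hk.symm
    rw [Finset.sum_range_succ, Finset.sum_range_one]
    norm_num
    have hne : v 0 ≠ v 1 := fun h => absurd (hinj 0 (by omega) 1 (by omega) h) (by omega)
    exact h2c (v 0) (v 1) (hne0 0 (by omega)) (hne0 1 (by omega)) hne
  · have hk3' : 3 ≤ k := hk3
    have hDL := hcyc k v ⟨⟨hk2, hinj⟩, hne0⟩ hk3' 0 (by omega)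
    have h1k : (0 + 1) % k = 1 := by rw [Nat.mod_eq_of_lt (by omega)]
    rw [h1k] at hDL
    have hsplit : (∑ i ∈ Finset.range k,
        (x (v i) (v ((i + 1) % k)) + x (v ((i + 1) % k)) (v i)))
        = (∑ i ∈ Finset.range k, x (v i) (v ((i + 1) % k)))
          + ∑ i ∈ Finset.range k, x (v ((i + 1) % k)) (v i) := Finset.sum_add_distrib
    have hb : x (v 1) (v 0) ≤ ∑ i ∈ Finset.range k, x (v ((i + 1) % k)) (v i) := by
      have h0m : (0 : ℕ) ∈ Finset.range k := Finset.mem_range.mpr (by omega)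
      have := Finset.single_le_sum (f := fun i => x (v ((i + 1) % k)) (v i))
        (fun i hi => (hap.1 _ _ ((arc_ne hk2 hinj (Finset.mem_range.mp hi)).symm)).1) h0m
      simpa [h1k] using this
    linarith [hDL, hsplit, hb]

def gfun (n : ℕ) : ℕ → ℕ := fun v =>
  if v = 0 then 4 else if v = 1 then 2 else if v = 2 then 3 else if v = 3 then 1
  else if v = n then 0 else v + 1

def gin (n : ℕ) : ℕ → ℕ := fun v =>
  if v = 4 then 0 else if v = 2 then 1 else if v = 3 then 2 else if v = 1 then 3
  else if v = 0 then n else v - 1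

lemma gfun_facts {n v : ℕ} (hn : 4 ≤ n) (hv : v ≤ n) :
    gfun n v ≤ n ∧ gin n (gfun n v) = v ∧ gfun n v ≠ v := by
  simp only [gfun]
  split_ifs <;> (simp only [gin]; split_ifs <;>
    first | omega | exact False.elim (by assumption))

lemma gin_facts {n v : ℕ} (hn : 4 ≤ n) (hv : v ≤ n) :
    gin n v ≤ n ∧ gfun n (gin n v) = v := by
  simp only [gin]
  split_ifs <;> (simp only [gfun]; split_ifs <;>
    first | omega | exact False.elim (by assumption))

noncomputable def xb (n : ℕ) : Fin (n+1) → Fin (n+1) → ℝ := fun i j =>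
  (if gfun n i.val = j.val then (1:ℝ)/2 else 0) +
  (if gfun n j.val = i.val then (1:ℝ)/2 else 0)

lemma xb_symm (n : ℕ) (i j : Fin (n+1)) : xb n i j = xb n j i := add_comm _ _

lemma xb_row (n : ℕ) (hn : 4 ≤ n) (i : Fin (n+1)) :
    ∑ j ∈ Finset.univ.erase i, xb n i j = 1 := by
  have hiv : i.val ≤ n := by omega
  obtain ⟨hg1, hg2, hg3⟩ := gfun_facts hn hiv
  obtain ⟨hh1, hh2⟩ := gin_facts hn hiv
  set a : Fin (n+1) := ⟨gfun n i.val, by omega⟩ with ha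
  set b : Fin (n+1) := ⟨gin n i.val, by omega⟩ with hb
  have key : ∀ j ∈ Finset.univ.erase i, xb n i j =
      (if j = a then (1:ℝ)/2 else 0) + (if j = b then (1:ℝ)/2 else 0) := by
    intro j _
    have c1 : (gfun n i.val = j.val) ↔ (j = a) := by
      constructor
      · intro h; exact Fin.ext h.symm
      · rintro rfl; rfl
    have c2 : (gfun n j.val = i.val) ↔ (j = b) := by
      constructor
      · intro h
        apply Fin.ext
        have := congrArg (gin n) h
        rwa [(gfun_facts hn (by omega : j.val ≤ n)).2.1] at this
      · rintro rfl; exact hh2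
    simp only [xb, c1, c2]
  rw [Finset.sum_congr rfl key, Finset.sum_add_distrib,
    Finset.sum_ite_eq' _ a (fun _ => (1:ℝ)/2), Finset.sum_ite_eq' _ b (fun _ => (1:ℝ)/2)]
  have hai : a ≠ i := fun h => hg3 (congrArg Fin.val h)
  have hbi : b ≠ i := by
    intro h
    have hval : gin n i.val = i.val := congrArg Fin.val h
    rw [hval] at hh2
    exact hg3 hh2
  simp [hai, hbi]
  norm_num

lemma xb_memPAP (n : ℕ) (hn : 4 ≤ n) : memPAP (xb n) := by
  refine ⟨?_, fun i => xb_row n hn i, ?_⟩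
  · intro i j _
    constructor <;> (unfold xb; split_ifs <;> norm_num)
  · intro i
    rw [Finset.sum_congr rfl (fun j _ => xb_symm n j i)]
    exact xb_row n hn i

lemma xb_arc (n : ℕ) (hn : 4 ≤ n) (i j : Fin (n+1)) (hi : i ≠ 0) (hj : j ≠ 0)
    (hij : i ≠ j) : xb n i j ≤ 1/2 := by
  have hi' : i.val ≠ 0 := fun h => hi (Fin.ext h)
  have hj' : j.val ≠ 0 := fun h => hj (Fin.ext h)
  have hiv : i.val ≤ n := by omega
  have hjv : j.val ≤ n := by omega
  have hnb : ¬(gfun n i.val = j.val ∧ gfun n j.val = i.val) := by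
    rintro ⟨h1, h2⟩
    revert h1 h2
    simp only [gfun]; split_ifs <;> omega
  unfold xb
  split_ifs with h1 h2 h3 <;> norm_num
  exact absurd ⟨h1, h2⟩ hnb

lemma xb_notDL (n : ℕ) (hn : 4 ≤ n) :
    ¬ memPDLbar (xb n) := by
  intro ⟨_, hcyc, _⟩
  set v3 : ℕ → Fin (n+1) := fun i => ⟨i % 3 + 1, by omega⟩ with hv3
  have hc : IsCycle1 3 v3 := by
    refine ⟨⟨by omega, ?_⟩, ?_⟩
    · intro i hi j hj h
      rw [hv3, Fin.ext_iff] at h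
      simp only at h
      omega
    · intro i _
      rw [hv3, Ne, Fin.ext_iff]
      simp
  have h := hcyc 3 v3 hc (le_refl 3) 0 (by omega)
  rw [Finset.sum_range_succ, Finset.sum_range_succ, Finset.sum_range_one] at h
  norm_num [hv3, xb, gfun] at h

lemma xb_mtz (n : ℕ) (hn : 4 ≤ n) : memPMTZbar (xb n) := by
  refine ⟨xb_memPAP n hn, ?_⟩
  rintro k v ⟨⟨hk2, hinj⟩, hne0⟩
  unfold cycleSum
  have hb : ∀ i < k, xb n (v i) (v ((i + 1) % k)) ≤ 1/2 := by
    intro i hi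
    exact xb_arc n hn _ _ (hne0 i hi) (hne0 _ (Nat.mod_lt _ (by omega)))
      (arc_ne hk2 hinj hi)
  have h := sum_range_le hb
  have hk2' : (2:ℝ) ≤ k := by exact_mod_cast hk2
  linarith

/-! ### Witness A : in `P_DL` but not `P_SCF`, case `n ≥ 5` -/

def sfun (L : ℕ) : ℕ → ℕ := fun v => if v = L then 1 else v + 1
def pfun (L : ℕ) : ℕ → ℕ := fun v => if v = 1 then L else v - 1

noncomputable def xa (n : ℕ) : Fin (n+1) → Fin (n+1) → ℝ := fun i j =>
  if (i.val = 0 ∧ j.val = n) ∨ (i.val = n ∧ j.val = 0) then 1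
  else if 1 ≤ i.val ∧ i.val ≤ n - 1 ∧ j.val = sfun (n-1) i.val then 2/3
  else if 1 ≤ i.val ∧ i.val ≤ n - 1 ∧ j.val = sfun (n-1) (sfun (n-1) i.val) then 1/3
  else 0

lemma sfun_mem {L v : ℕ} (hL : 2 ≤ L) (h1 : 1 ≤ v) (h2 : v ≤ L) :
    1 ≤ sfun L v ∧ sfun L v ≤ L := by
  simp only [sfun]; split_ifs <;> omega

lemma sfun_ne {L v : ℕ} (hL : 4 ≤ L) (h1 : 1 ≤ v) (h2 : v ≤ L) :
    sfun L v ≠ v ∧ sfun L (sfun L v) ≠ v ∧ sfun L (sfun L v) ≠ sfun L v ∧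
      sfun L (sfun L (sfun L v)) ≠ v := by
  simp only [sfun]
  split_ifs <;> first | omega | exact False.elim (by assumption)

lemma pfun_mem {L v : ℕ} (hL : 2 ≤ L) (h1 : 1 ≤ v) (h2 : v ≤ L) :
    1 ≤ pfun L v ∧ pfun L v ≤ L := by
  simp only [pfun]; split_ifs <;> omega

lemma pfun_ne {L v : ℕ} (hL : 4 ≤ L) (h1 : 1 ≤ v) (h2 : v ≤ L) :
    pfun L v ≠ v ∧ pfun L (pfun L v) ≠ v ∧ pfun L (pfun L v) ≠ pfun L v := by
  simp only [pfun]
  split_ifs <;> first | omega | exact False.elim (by assumption)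

lemma sfun_eq_iff {L a b : ℕ} (hL : 2 ≤ L) (ha1 : 1 ≤ a) (ha2 : a ≤ L)
    (hb1 : 1 ≤ b) (hb2 : b ≤ L) : sfun L a = b ↔ a = pfun L b := by
  simp only [sfun, pfun]
  split_ifs <;> omega

lemma sum_pair_ind {β : Type} [DecidableEq β] (s : Finset β) (a b : β) (hab : a ≠ b)
    (ha : a ∈ s) (hb : b ∈ s) (c d : ℝ) :
    ∑ j ∈ s, ((if j = a then c else 0) + (if j = b then d else 0)) = c + d := by
  rw [Finset.sum_add_distrib, Finset.sum_ite_eq' s a (fun _ => c),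
    Finset.sum_ite_eq' s b (fun _ => d), if_pos ha, if_pos hb]

lemma sum_one_ind {β : Type} [DecidableEq β] (s : Finset β) (a : β)
    (ha : a ∈ s) (c : ℝ) :
    ∑ j ∈ s, (if j = a then c else 0) = c := by
  rw [Finset.sum_ite_eq' s a (fun _ => c), if_pos ha]

/-- midpoint-node pointwise description of `xa` rows -/
lemma xa_mid (n : ℕ) (hn : 5 ≤ n) {i : Fin (n+1)} (h1 : 1 ≤ i.val) (h2 : i.val ≤ n - 1) :
    ∃ a b : Fin (n+1), a.val = sfun (n-1) i.val ∧
      b.val = sfun (n-1) (sfun (n-1) i.val) ∧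
      1 ≤ a.val ∧ a.val ≤ n - 1 ∧ 1 ≤ b.val ∧ b.val ≤ n - 1 ∧
      a ≠ b ∧ a ≠ i ∧ b ≠ i ∧
      ∀ j : Fin (n+1), xa n i j =
        (if j = a then (2:ℝ)/3 else 0) + (if j = b then (1:ℝ)/3 else 0) := by
  have hL : 4 ≤ n - 1 := by omega
  have hsa := sfun_mem (by omega) h1 h2
  have hsb := sfun_mem (by omega) hsa.1 hsa.2
  obtain ⟨hne1, hne2, hne3, _⟩ := sfun_ne hL h1 h2
  refine ⟨⟨sfun (n-1) i.val, by omega⟩, ⟨sfun (n-1) (sfun (n-1) i.val), by omega⟩,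
    rfl, rfl, hsa.1, hsa.2, hsb.1, hsb.2,
    fun h => hne3 (congrArg Fin.val h).symm,
    fun h => hne1 (congrArg Fin.val h),
    fun h => hne2 (congrArg Fin.val h), ?_⟩
  intro j
  have hc1 : ¬((i.val = 0 ∧ j.val = n) ∨ (i.val = n ∧ j.val = 0)) := by omega
  simp only [xa]
  rw [if_neg hc1]
  by_cases hja : j = (⟨sfun (n-1) i.val, by omega⟩ : Fin (n+1))
  · have hjv : j.val = sfun (n-1) i.val := congrArg Fin.val hja
    rw [if_pos ⟨h1, h2, hjv⟩, if_pos hja, if_neg]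
    · norm_num
    · intro h
      have hbv : j.val = sfun (n-1) (sfun (n-1) i.val) := congrArg Fin.val h
      exact hne3 (hjv.symm.trans hbv).symm
  · have hjv : j.val ≠ sfun (n-1) i.val := fun h => hja (Fin.ext h)
    rw [if_neg (fun h => hjv h.2.2), if_neg hja]
    by_cases hjb : j = (⟨sfun (n-1) (sfun (n-1) i.val), by omega⟩ : Fin (n+1))
    · rw [if_pos ⟨h1, h2, congrArg Fin.val hjb⟩, if_pos hjb]; norm_num
    · have hjv2 : j.val ≠ sfun (n-1) (sfun (n-1) i.val) := fun h => hjb (Fin.ext h)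
      rw [if_neg (fun h => hjv2 h.2.2), if_neg hjb]; norm_num

lemma xa_row (n : ℕ) (hn : 5 ≤ n) (i : Fin (n+1)) :
    ∑ j ∈ Finset.univ.erase i, xa n i j = 1 := by
  have hiv : i.val ≤ n := by omega
  by_cases hi0 : i.val = 0
  · have key : ∀ j ∈ Finset.univ.erase i, xa n i j =
        (if j = (⟨n, by omega⟩ : Fin (n+1)) then (1:ℝ) else 0) := by
      intro j _
      simp only [xa]
      by_cases hj : j.val = n
      · rw [if_pos (Or.inl ⟨hi0, hj⟩), if_pos (Fin.ext hj)]
      · rw [if_neg (by omega), if_neg (fun h => absurd h.1 (by omega)),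
          if_neg (fun h => absurd h.1 (by omega)),
          if_neg (fun h => hj (congrArg Fin.val h))]
    rw [Finset.sum_congr rfl key, sum_one_ind]
    exact Finset.mem_erase.mpr ⟨fun h => by
      have : (n : ℕ) = i.val := congrArg Fin.val h
      omega, Finset.mem_univ _⟩
  · by_cases hin : i.val = n
    · have key : ∀ j ∈ Finset.univ.erase i, xa n i j =
          (if j = (0 : Fin (n+1)) then (1:ℝ) else 0) := by
        intro j _
        simp only [xa]
        by_cases hj : j.val = 0
        · rw [if_pos (Or.inr ⟨hin, hj⟩), if_pos (Fin.ext hj)]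
        · rw [if_neg (by omega), if_neg (fun h => absurd h.2.1 (by omega)),
            if_neg (fun h => absurd h.2.1 (by omega)),
            if_neg (fun h => hj (congrArg Fin.val h))]
      rw [Finset.sum_congr rfl key, sum_one_ind]
      refine Finset.mem_erase.mpr ⟨fun h => ?_, Finset.mem_univ _⟩
      have h0 : (0 : ℕ) = i.val := congrArg Fin.val h
      omega
    · obtain ⟨a, b, _, _, _, _, _, _, hab, hai, hbi, hpt⟩ :=
        xa_mid n hn (by omega : 1 ≤ i.val) (by omega : i.val ≤ n - 1)
      rw [Finset.sum_congr rfl (fun j _ => hpt j),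
        sum_pair_ind _ a b hab (Finset.mem_erase.mpr ⟨hai, Finset.mem_univ _⟩)
          (Finset.mem_erase.mpr ⟨hbi, Finset.mem_univ _⟩)]
      norm_num

lemma xa_col (n : ℕ) (hn : 5 ≤ n) (i : Fin (n+1)) :
    ∑ j ∈ Finset.univ.erase i, xa n j i = 1 := by
  have hiv : i.val ≤ n := by omega
  have hL : 4 ≤ n - 1 := by omega
  by_cases hi0 : i.val = 0
  · have key : ∀ j ∈ Finset.univ.erase i, xa n j i =
        (if j = (⟨n, by omega⟩ : Fin (n+1)) then (1:ℝ) else 0) := by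
      intro j _
      simp only [xa]
      by_cases hj : j.val = n
      · rw [if_pos (Or.inr ⟨hj, hi0⟩), if_pos (Fin.ext hj)]
      · rw [if_neg (by omega), if_neg ?c2, if_neg ?c3,
          if_neg (fun h => hj (congrArg Fin.val h))]
        case c2 =>
          rintro ⟨hw1, hw2, hw3⟩
          have := (sfun_mem (by omega : 2 ≤ n - 1) hw1 hw2).1
          omega
        case c3 =>
          rintro ⟨hw1, hw2, hw3⟩
          have hs1 := sfun_mem (by omega : 2 ≤ n - 1) hw1 hw2
          have := (sfun_mem (by omega : 2 ≤ n - 1) hs1.1 hs1.2).1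
          omega
    rw [Finset.sum_congr rfl key, sum_one_ind]
    exact Finset.mem_erase.mpr ⟨fun h => by
      have : (n : ℕ) = i.val := congrArg Fin.val h
      omega, Finset.mem_univ _⟩
  · by_cases hin : i.val = n
    · have key : ∀ j ∈ Finset.univ.erase i, xa n j i =
          (if j = (0 : Fin (n+1)) then (1:ℝ) else 0) := by
        intro j _
        simp only [xa]
        by_cases hj : j.val = 0
        · rw [if_pos (Or.inl ⟨hj, hin⟩), if_pos (Fin.ext hj)]
        · rw [if_neg (by omega), if_neg ?d2, if_neg ?d3,
            if_neg (fun h => hj (congrArg Fin.val h))]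
          case d2 =>
            rintro ⟨hw1, hw2, hw3⟩
            have := (sfun_mem (by omega : 2 ≤ n - 1) hw1 hw2).2
            omega
          case d3 =>
            rintro ⟨hw1, hw2, hw3⟩
            have hs1 := sfun_mem (by omega : 2 ≤ n - 1) hw1 hw2
            have := (sfun_mem (by omega : 2 ≤ n - 1) hs1.1 hs1.2).2
            omega
      rw [Finset.sum_congr rfl key, sum_one_ind]
      refine Finset.mem_erase.mpr ⟨fun h => ?_, Finset.mem_univ _⟩
      have h0 : (0 : ℕ) = i.val := congrArg Fin.val h
      omega
    · -- middle case: predecessors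
      have him1 : 1 ≤ i.val := by omega
      have him2 : i.val ≤ n - 1 := by omega
      have hp := pfun_mem (by omega : 2 ≤ n - 1) him1 him2
      have hpp := pfun_mem (by omega : 2 ≤ n - 1) hp.1 hp.2
      obtain ⟨hpne1, hpne2, hpne3⟩ := pfun_ne hL him1 him2
      set P : Fin (n+1) := ⟨pfun (n-1) i.val, by omega⟩ with hP
      set Q : Fin (n+1) := ⟨pfun (n-1) (pfun (n-1) i.val), by omega⟩ with hQ
      have hsP : sfun (n-1) P.val = i.val := by
        rw [sfun_eq_iff (by omega) hp.1 hp.2 him1 him2]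
      have hsQ : sfun (n-1) Q.val = P.val := by
        rw [sfun_eq_iff (by omega) hpp.1 hpp.2 hp.1 hp.2]
      have key : ∀ j ∈ Finset.univ.erase i, xa n j i =
          (if j = P then (2:ℝ)/3 else 0) + (if j = Q then (1:ℝ)/3 else 0) := by
        intro j _
        simp only [xa]
        have hc1 : ¬((j.val = 0 ∧ i.val = n) ∨ (j.val = n ∧ i.val = 0)) := by omega
        rw [if_neg hc1]
        by_cases hjP : j = P
        · have hjv : j.val = pfun (n-1) i.val := congrArg Fin.val hjP
          rw [if_pos ⟨by omega, by omega, by rw [hjv]; exact hsP.symm⟩, if_pos hjP,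
            if_neg (fun h => hpne3 (congrArg Fin.val (hjP.symm.trans h)).symm)]
          norm_num
        · by_cases hjQ : j = Q
          · have hjv : j.val = pfun (n-1) (pfun (n-1) i.val) := congrArg Fin.val hjQ
            have hsQ' : sfun (n-1) (pfun (n-1) (pfun (n-1) i.val)) = pfun (n-1) i.val := hsQ
            have hsP' : sfun (n-1) (pfun (n-1) i.val) = i.val := hsP
            have he3 : i.val = sfun (n-1) (sfun (n-1) j.val) := by
              rw [hjv, hsQ', hsP']
            have hc2 : ¬(1 ≤ j.val ∧ j.val ≤ n - 1 ∧ i.val = sfun (n-1) j.val) := by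
              rintro ⟨_, _, hw3⟩
              rw [hjv, hsQ'] at hw3
              exact hpne1 hw3.symm
            rw [if_neg hc2, if_pos ⟨by omega, by omega, he3⟩, if_neg hjP, if_pos hjQ]
            norm_num
          · have hv1 : j.val ≠ pfun (n-1) i.val := fun h => hjP (Fin.ext h)
            have hv2 : j.val ≠ pfun (n-1) (pfun (n-1) i.val) := fun h => hjQ (Fin.ext h)
            have hc2 : ¬(1 ≤ j.val ∧ j.val ≤ n - 1 ∧ i.val = sfun (n-1) j.val) := by
              rintro ⟨hw1, hw2, hw3⟩
              exact hv1 ((sfun_eq_iff (by omega) hw1 hw2 him1 him2).mp hw3.symm)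
            have hc3 : ¬(1 ≤ j.val ∧ j.val ≤ n - 1 ∧
                i.val = sfun (n-1) (sfun (n-1) j.val)) := by
              rintro ⟨hw1, hw2, hw3⟩
              have hs1 := sfun_mem (by omega : 2 ≤ n - 1) hw1 hw2
              have step1 : sfun (n-1) j.val = pfun (n-1) i.val :=
                (sfun_eq_iff (by omega) hs1.1 hs1.2 him1 him2).mp hw3.symm
              exact hv2 ((sfun_eq_iff (by omega) hw1 hw2 hp.1 hp.2).mp step1)
            rw [if_neg hc2, if_neg hc3, if_neg hjP, if_neg hjQ]
            norm_num
      rw [Finset.sum_congr rfl key,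
        sum_pair_ind _ P Q (fun h => hpne3 (congrArg Fin.val h).symm)
          (Finset.mem_erase.mpr ⟨fun h => hpne1 (congrArg Fin.val h), Finset.mem_univ _⟩)
          (Finset.mem_erase.mpr ⟨fun h => hpne2 (congrArg Fin.val h), Finset.mem_univ _⟩)]
      norm_num

lemma xa_nonneg (n : ℕ) (i j : Fin (n+1)) : 0 ≤ xa n i j := by
  simp only [xa]; split_ifs <;> norm_num

lemma xa_le_one (n : ℕ) (i j : Fin (n+1)) : xa n i j ≤ 1 := by
  simp only [xa]; split_ifs <;> norm_num

lemma xa_arc (n : ℕ) (hn : 5 ≤ n) (i j : Fin (n+1)) (hi : i ≠ 0) (hj : j ≠ 0)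
    (hij : i ≠ j) : xa n i j + xa n j i ≤ 2/3 := by
  have hi' : i.val ≠ 0 := fun h => hi (Fin.ext h)
  have hj' : j.val ≠ 0 := fun h => hj (Fin.ext h)
  have hiv : i.val ≤ n := by omega
  have hjv : j.val ≤ n := by omega
  have hL : 4 ≤ n - 1 := by omega
  simp only [xa]
  rw [if_neg (show ¬((i.val = 0 ∧ j.val = n) ∨ (i.val = n ∧ j.val = 0)) from by omega),
    if_neg (show ¬((j.val = 0 ∧ i.val = n) ∨ (j.val = n ∧ i.val = 0)) from by omega)]
  by_cases h1 : 1 ≤ i.val ∧ i.val ≤ n - 1 ∧ j.val = sfun (n-1) i.val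
  · obtain ⟨ha1, ha2, ha3⟩ := h1
    have hd2 : ¬(1 ≤ j.val ∧ j.val ≤ n - 1 ∧ i.val = sfun (n-1) j.val) := by
      rintro ⟨-, -, hb3⟩
      rw [ha3] at hb3
      exact (sfun_ne hL ha1 ha2).2.1 hb3.symm
    have hd3 : ¬(1 ≤ j.val ∧ j.val ≤ n - 1 ∧
        i.val = sfun (n-1) (sfun (n-1) j.val)) := by
      rintro ⟨-, -, hb3⟩
      rw [ha3] at hb3
      exact (sfun_ne hL ha1 ha2).2.2.2 hb3.symm
    rw [if_pos ⟨ha1, ha2, ha3⟩, if_neg hd2, if_neg hd3]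
    norm_num
  · rw [if_neg h1]
    by_cases h2 : 1 ≤ i.val ∧ i.val ≤ n - 1 ∧ j.val = sfun (n-1) (sfun (n-1) i.val)
    · obtain ⟨ha1, ha2, ha3⟩ := h2
      have hd2 : ¬(1 ≤ j.val ∧ j.val ≤ n - 1 ∧ i.val = sfun (n-1) j.val) := by
        rintro ⟨hb1, hb2, hb3⟩
        rw [ha3] at hb3
        exact (sfun_ne hL ha1 ha2).2.2.2 hb3.symm
      rw [if_pos ⟨ha1, ha2, ha3⟩, if_neg hd2]
      split_ifs <;> norm_num
    · rw [if_neg h2]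
      split_ifs <;> norm_num

lemma xa_dl (n : ℕ) (hn : 5 ≤ n) : memPDLbar (xa n) := by
  refine ⟨⟨fun i j _ => ⟨xa_nonneg n i j, xa_le_one n i j⟩,
    fun i => xa_row n hn i, fun i => xa_col n hn i⟩, ?_, ?_⟩
  · intro k v hc hk3 i0 hi0
    obtain ⟨⟨hk2, hinj⟩, hne0⟩ := hc
    have hb : ∀ i < k, xa n (v i) (v ((i + 1) % k)) + xa n (v ((i + 1) % k)) (v i) ≤ 2/3 := by
      intro i hi
      exact xa_arc n hn _ _ (hne0 i hi) (hne0 _ (Nat.mod_lt _ (by omega)))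
        (arc_ne hk2 hinj hi)
    have hsum := sum_range_le hb
    have hrev : 0 ≤ xa n (v ((i0 + 1) % k)) (v i0) := xa_nonneg n _ _
    have hk3' : (3:ℝ) ≤ k := by exact_mod_cast hk3
    linarith
  · intro i j hi hj hij
    have := xa_arc n hn i j hi hj hij
    linarith

lemma xa_notSCF (n : ℕ) (hn : 5 ≤ n) : ¬ memPSCFbar (xa n) := by
  rintro ⟨-, hcl⟩
  set en : Fin (n+1) := ⟨n, by omega⟩ with hen
  set S : Finset (Fin (n+1)) := (Finset.univ.erase en).erase 0 with hS
  have h0S : (0 : Fin (n+1)) ∉ S := Finset.notMem_erase _ _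
  have h0en : (0 : Fin (n+1)) ≠ en := fun h => by
    have : (0:ℕ) = n := congrArg Fin.val h
    omega
  have hScard : S.card = n - 1 := by
    rw [hS, Finset.card_erase_of_mem, Finset.card_erase_of_mem (Finset.mem_univ _),
      Finset.card_univ, Fintype.card_fin]
    · omega
    · exact Finset.mem_erase.mpr ⟨h0en, Finset.mem_univ _⟩
  have hmemS : ∀ j : Fin (n+1), j ∈ S ↔ (1 ≤ j.val ∧ j.val ≤ n - 1) := by
    intro j
    rw [hS, Finset.mem_erase, Finset.mem_erase]
    constructor
    · rintro ⟨hj0, hjen, -⟩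
      have h1 : j.val ≠ 0 := fun h => hj0 (Fin.ext h)
      have h2 : j.val ≠ n := fun h => hjen (Fin.ext h)
      have := j.isLt
      omega
    · rintro ⟨h1, h2⟩
      exact ⟨fun h => by have : j.val = 0 := congrArg Fin.val h; omega,
        fun h => by have : j.val = n := congrArg Fin.val h; omega, Finset.mem_univ _⟩
  have hrow : ∀ i ∈ S, ∑ j ∈ S.erase i, xa n i j = 1 := by
    intro i hiS
    obtain ⟨hi1, hi2⟩ := (hmemS i).mp hiS
    obtain ⟨a, b, hav, hbv, ha1, ha2, hb1, hb2, hab, hai, hbi, hpt⟩ :=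
      xa_mid n hn hi1 hi2
    rw [Finset.sum_congr rfl (fun j _ => hpt j),
      sum_pair_ind _ a b hab
        (Finset.mem_erase.mpr ⟨hai, (hmemS a).mpr ⟨ha1, ha2⟩⟩)
        (Finset.mem_erase.mpr ⟨hbi, (hmemS b).mpr ⟨hb1, hb2⟩⟩)]
    norm_num
  have hsum : ∑ i ∈ S, ∑ j ∈ S.erase i, xa n i j = (S.card : ℝ) := by
    rw [Finset.sum_congr rfl hrow, Finset.sum_const, nsmul_eq_mul, mul_one]
  have h := hcl S h0S (by omega)
  rw [hsum] at h
  linarith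

/-! ### Witness C : in `P_DL` but not `P_SCF`, case `n = 4` (5 nodes) -/

noncomputable def xc : Fin 5 → Fin 5 → ℝ := fun i j =>
  if i = j then 0
  else if i = 0 ∨ j = 0 then (if i = 4 ∨ j = 4 then 11/20 else 3/20)
  else if i = 4 ∨ j = 4 then 3/20 else 7/20

lemma xc_symm (i j : Fin 5) : xc i j = xc j i := by
  simp only [xc]
  by_cases h1 : i = j
  · rw [if_pos h1, if_pos h1.symm]
  · rw [if_neg h1, if_neg (Ne.symm h1)]
    by_cases h2 : i = 0 ∨ j = 0
    · rw [if_pos h2, if_pos (Or.symm h2)]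
      by_cases h3 : i = 4 ∨ j = 4
      · rw [if_pos h3, if_pos (Or.symm h3)]
      · rw [if_neg h3, if_neg (fun h => h3 (Or.symm h))]
    · rw [if_neg h2, if_neg (fun h => h2 (Or.symm h))]
      by_cases h3 : i = 4 ∨ j = 4
      · rw [if_pos h3, if_pos (Or.symm h3)]
      · rw [if_neg h3, if_neg (fun h => h3 (Or.symm h))]

lemma xc_nonneg (i j : Fin 5) : 0 ≤ xc i j := by
  simp only [xc]; split_ifs <;> norm_num

lemma xc_le_one (i j : Fin 5) : xc i j ≤ 1 := by
  simp only [xc]; split_ifs <;> norm_num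

lemma xc_diag (i : Fin 5) : xc i i = 0 := by simp [xc]

lemma xc_row (i : Fin 5) : ∑ j ∈ Finset.univ.erase i, xc i j = 1 := by
  rw [Finset.sum_erase _ (xc_diag i), Fin.sum_univ_five]
  fin_cases i <;>
    norm_num [xc, Fin.ext_iff, show ((4:Fin 5)).val = 4 from rfl,
      show ((3:Fin 5)).val = 3 from rfl, show ((2:Fin 5)).val = 2 from rfl,
      show ((1:Fin 5)).val = 1 from rfl, show ((0:Fin 5)).val = 0 from rfl]

lemma xc_memPAP : memPAP (n := 4) xc := by
  refine ⟨fun i j _ => ⟨xc_nonneg i j, xc_le_one i j⟩, xc_row, ?_⟩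
  intro i
  rw [Finset.sum_congr rfl (fun j _ => xc_symm j i)]
  exact xc_row i

lemma xc_tri {p q : Fin 5} (hp : p ≠ 0) (hq : q ≠ 0) (hp4 : p ≠ 4) (hq4 : q ≠ 4)
    (hpq : p ≠ q) : xc p q = 7/20 := by
  simp only [xc]
  rw [if_neg hpq, if_neg (by tauto), if_neg (by tauto)]

lemma xc_four {p q : Fin 5} (hp : p ≠ 0) (hq : q ≠ 0) (hpq : p ≠ q)
    (h4 : p = 4 ∨ q = 4) : xc p q = 3/20 := by
  simp only [xc]
  rw [if_neg hpq, if_neg (by tauto), if_pos h4]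

lemma xc_small {p q : Fin 5} (hp : p ≠ 0) (hq : q ≠ 0) (hpq : p ≠ q) :
    xc p q ≤ 7/20 := by
  simp only [xc]
  split_ifs <;> first | tauto | norm_num

lemma xc_dl : memPDLbar (n := 4) xc := by
  refine ⟨xc_memPAP, ?_, ?_⟩
  · intro k v hc hk3 i0 hi0
    obtain ⟨⟨hk2, hinj⟩, hne0⟩ := hc
    have hvne : ∀ i < k, v i ≠ v ((i+1) % k) := fun i hi => arc_ne hk2 hinj hi
    have hmlt : ∀ i : ℕ, (i + 1) % k < k := fun i => Nat.mod_lt _ (by omega)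
    rcases Nat.lt_or_ge k 4 with hk4 | hk4
    · -- k = 3
      obtain rfl : k = 3 := by omega
      have ha := hne0 0 (by omega)
      have hb := hne0 1 (by omega)
      have hcc := hne0 2 (by omega)
      have hab : v 0 ≠ v 1 := fun h => by have := hinj 0 (by omega) 1 (by omega) h; omega
      have hbc : v 1 ≠ v 2 := fun h => by have := hinj 1 (by omega) 2 (by omega) h; omega
      have hac : v 0 ≠ v 2 := fun h => by have := hinj 0 (by omega) 2 (by omega) h; omega
      rw [Finset.sum_range_succ, Finset.sum_range_succ, Finset.sum_range_one]
      norm_num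
      have hrev0 : 0 ≤ xc (v ((i0 + 1) % 3)) (v i0) := xc_nonneg _ _
      by_cases h04 : v 0 = 4
      · have h14 : v 1 ≠ 4 := fun h => hab (h04.trans h.symm)
        have h24 : v 2 ≠ 4 := fun h => hac (h04.trans h.symm)
        have e1 : xc (v 0) (v 1) = 3/20 := xc_four ha hb hab (Or.inl h04)
        have e2 : xc (v 1) (v 0) = 3/20 := xc_four hb ha hab.symm (Or.inr h04)
        have e3 : xc (v 2) (v 0) = 3/20 := xc_four hcc ha hac.symm (Or.inr h04)
        have e4 : xc (v 0) (v 2) = 3/20 := xc_four ha hcc hac (Or.inl h04)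
        have e5 : xc (v 1) (v 2) ≤ 7/20 := xc_small hb hcc hbc
        have e6 : xc (v 2) (v 1) ≤ 7/20 := xc_small hcc hb hbc.symm
        linarith
      · by_cases h14 : v 1 = 4
        · have h24 : v 2 ≠ 4 := fun h => hbc (h14.trans h.symm)
          have e1 : xc (v 0) (v 1) = 3/20 := xc_four ha hb hab (Or.inr h14)
          have e2 : xc (v 1) (v 0) = 3/20 := xc_four hb ha hab.symm (Or.inl h14)
          have e3 : xc (v 1) (v 2) = 3/20 := xc_four hb hcc hbc (Or.inl h14)
          have e4 : xc (v 2) (v 1) = 3/20 := xc_four hcc hb hbc.symm (Or.inr h14)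
          have e5 : xc (v 2) (v 0) ≤ 7/20 := xc_small hcc ha hac.symm
          have e6 : xc (v 0) (v 2) ≤ 7/20 := xc_small ha hcc hac
          linarith
        · by_cases h24 : v 2 = 4
          · have e1 : xc (v 1) (v 2) = 3/20 := xc_four hb hcc hbc (Or.inr h24)
            have e2 : xc (v 2) (v 1) = 3/20 := xc_four hcc hb hbc.symm (Or.inl h24)
            have e3 : xc (v 2) (v 0) = 3/20 := xc_four hcc ha hac.symm (Or.inl h24)
            have e4 : xc (v 0) (v 2) = 3/20 := xc_four ha hcc hac (Or.inr h24)
            have e5 : xc (v 0) (v 1) ≤ 7/20 := xc_small ha hb hab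
            have e6 : xc (v 1) (v 0) ≤ 7/20 := xc_small hb ha hab.symm
            linarith
          · -- all in the triangle
            have e1 : xc (v 0) (v 1) = 7/20 := xc_tri ha hb h04 h14 hab
            have e2 : xc (v 1) (v 0) = 7/20 := xc_tri hb ha h14 h04 hab.symm
            have e3 : xc (v 1) (v 2) = 7/20 := xc_tri hb hcc h14 h24 hbc
            have e4 : xc (v 2) (v 1) = 7/20 := xc_tri hcc hb h24 h14 hbc.symm
            have e5 : xc (v 2) (v 0) = 7/20 := xc_tri hcc ha h24 h04 hac.symm
            have e6 : xc (v 0) (v 2) = 7/20 := xc_tri ha hcc h04 h24 hac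
            have hrev : xc (v ((i0 + 1) % 3)) (v i0) = 7/20 := by
              interval_cases i0 <;> norm_num [e2, e4, e6]
            linarith
    · -- k ≥ 4 : uniform bound
      have hb : ∀ i < k, xc (v i) (v ((i + 1) % k)) + xc (v ((i + 1) % k)) (v i) ≤ 7/10 := by
        intro i hi
        have h1 := xc_small (hne0 i hi) (hne0 _ (hmlt i)) (hvne i hi)
        have h2 := xc_small (hne0 _ (hmlt i)) (hne0 i hi) (hvne i hi).symm
        linarith
      have hsum := sum_range_le hb
      have hrev : 0 ≤ xc (v ((i0 + 1) % k)) (v i0) := xc_nonneg _ _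
      have hk4' : (4:ℝ) ≤ k := by exact_mod_cast hk4
      linarith
  · intro i j hi hj hij
    have h1 := xc_small hi hj hij
    have h2 := xc_small hj hi (Ne.symm hij)
    linarith

lemma xc_notSCF : ¬ memPSCFbar (n := 4) xc := by
  rintro ⟨-, hcl⟩
  have h := hcl {1, 2, 3} (by decide) (by decide)
  have hc : ({1, 2, 3} : Finset (Fin 5)).card = 3 := by decide
  rw [hc] at h
  have e1 : ({1, 2, 3} : Finset (Fin 5)).erase 1 = {2, 3} := by decide
  have e2 : ({1, 2, 3} : Finset (Fin 5)).erase 2 = {1, 3} := by decide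
  have e3 : ({1, 2, 3} : Finset (Fin 5)).erase 3 = {1, 2} := by decide
  rw [Finset.sum_insert (by decide), Finset.sum_pair (show (2:Fin 5) ≠ 3 by decide),
    e1, e2, e3, Finset.sum_pair (show (2:Fin 5) ≠ 3 by decide),
    Finset.sum_pair (show (1:Fin 5) ≠ 3 by decide),
    Finset.sum_pair (show (1:Fin 5) ≠ 2 by decide)] at h
  rw [xc_tri (by decide) (by decide) (by decide) (by decide) (by decide),
    xc_tri (by decide) (by decide) (by decide) (by decide) (by decide),
    xc_tri (by decide) (by decide) (by decide) (by decide) (by decide),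
    xc_tri (by decide) (by decide) (by decide) (by decide) (by decide),
    xc_tri (by decide) (by decide) (by decide) (by decide) (by decide),
    xc_tri (by decide) (by decide) (by decide) (by decide) (by decide)] at h
  norm_num at h


/-- For `n ≥ 4` (here `n + 1 ≥ 4` nodes): `P̄_SCF ⊆ P̄_DL ⊆ P̄_MTZ`, and for
`n ≥ 5` (here `n + 1 ≥ 5` nodes) both inclusions are strict. -/
theorem stmt_19 (n : ℕ) (hn : 4 ≤ n + 1) :
    (∀ x : Fin (n + 1) → Fin (n + 1) → ℝ, memPSCFbar x → memPDLbar x) ∧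
    (∀ x : Fin (n + 1) → Fin (n + 1) → ℝ, memPDLbar x → memPMTZbar x) ∧
    (5 ≤ n + 1 →
      (∃ x : Fin (n + 1) → Fin (n + 1) → ℝ, memPDLbar x ∧ ¬ memPSCFbar x) ∧
      (∃ x : Fin (n + 1) → Fin (n + 1) → ℝ, memPMTZbar x ∧ ¬ memPDLbar x)) := by
  refine ⟨fun x => scf_dl x, fun x => dl_mtz x, fun h5 => ⟨?_, ?_⟩⟩
  · rcases Nat.lt_or_ge n 5 with h4 | h5'
    · have hn4 : n = 4 := by omega
      subst hn4
      exact ⟨xc, xc_dl, xc_notSCF⟩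
    · exact ⟨xa n, xa_dl n h5', xa_notSCF n h5'⟩
  · exact ⟨xb n, xb_mtz n (by omega), xb_notDL n (by omega)⟩
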